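/- Let G = ([N],E) be a graph with nonnegative real edge weights r_e, N ≥ 2, and suppose for every nonempty proper subset I ⊊ [N]: r[E]/(N-1) ≤ (r[E(I)] + r[E(I,[N]\I)])/|I|. Then the numbers R_i = r[E_i] - r[E]/(N-1) are nonnegative and satisfy Σ_{i∈I} R_i ≥ r[E(I)] for all nonempty proper I ⊊ [N], and r[E] - Σ_i R_i = r[E]/(N-1). -/

import Mathlib

open scoped Classical


/-- Sum of edge weights over a set of (potential) edges. -/
noncomputable def wsum {N : ℕ} (r : Sym2 (Fin N) → ℝ) (s : Set (Sym2 (Fin N))) : ℝ :=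
  ∑ e ∈ (Set.toFinite s).toFinset, r e

lemma wsum_eq {N : ℕ} (r : Sym2 (Fin N) → ℝ) (s : Set (Sym2 (Fin N))) :
    wsum r s = ∑ e : Sym2 (Fin N), if e ∈ s then r e else 0 := by
  classical
  rw [wsum, ← Finset.sum_filter]
  congr 1
  ext e
  simp [Set.Finite.mem_toFinset]

lemma wsum_nonneg {N : ℕ} {r : Sym2 (Fin N) → ℝ} (hr : ∀ e, 0 ≤ r e)
    (s : Set (Sym2 (Fin N))) : 0 ≤ wsum r s :=
  Finset.sum_nonneg fun e _ => hr e

lemma sum_incident {N : ℕ} (G : SimpleGraph (Fin N)) (r : Sym2 (Fin N) → ℝ)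
    (I : Finset (Fin N)) :
    ∑ i ∈ I, wsum r {e | e ∈ G.edgeSet ∧ i ∈ e}
      = 2 * wsum r {e | e ∈ G.edgeSet ∧ ∀ v ∈ e, v ∈ I}
        + wsum r {e | e ∈ G.edgeSet ∧ ∃ u v, e = s(u, v) ∧ u ∈ I ∧ v ∉ I} := by
  classical
  simp only [wsum_eq, Set.mem_setOf_eq]
  rw [Finset.sum_comm, Finset.mul_sum, ← Finset.sum_add_distrib]
  refine Finset.sum_congr rfl fun e _ => ?_
  induction e using Sym2.ind with
  | _ u v =>
    by_cases hE : s(u, v) ∈ G.edgeSet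
    · have huv : u ≠ v := G.ne_of_adj hE
      have hmem : ∀ i : Fin N, (s(u, v) ∈ G.edgeSet ∧ i ∈ s(u, v)) ↔ (i = u ∨ i = v) := by
        intro i; simp [hE, Sym2.mem_iff]
      have hall : (s(u, v) ∈ G.edgeSet ∧ ∀ w ∈ s(u, v), w ∈ (I : Set (Fin N))) ↔
          (u ∈ I ∧ v ∈ I) := by
        simp [hE, Sym2.mem_iff]
      have hcross : (s(u, v) ∈ G.edgeSet ∧ ∃ a b, s(u, v) = s(a, b) ∧ a ∈ I ∧ b ∉ I) ↔
          ((u ∈ I ∧ v ∉ I) ∨ (v ∈ I ∧ u ∉ I)) := by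
        simp only [hE, true_and]
        constructor
        · rintro ⟨a, b, hab, ha, hb⟩
          rw [Sym2.eq_iff] at hab
          rcases hab with ⟨rfl, rfl⟩ | ⟨rfl, rfl⟩
          · exact Or.inl ⟨ha, hb⟩
          · exact Or.inr ⟨ha, hb⟩
        · rintro (⟨ha, hb⟩ | ⟨ha, hb⟩)
          · exact ⟨u, v, rfl, ha, hb⟩
          · exact ⟨v, u, Sym2.eq_swap, ha, hb⟩
      have hadj : G.Adj u v := hE
      simp only [hmem, hall, hcross]
      have key : (∑ x ∈ I, if x = u ∨ x = v then r s(u, v) else 0)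
          = ((I ∩ {u, v}).card : ℝ) * r s(u, v) := by
        rw [← Finset.sum_filter,
          show I.filter (fun x => x = u ∨ x = v) = I ∩ {u, v} by ext x; simp,
          Finset.sum_const, nsmul_eq_mul]
      simp only [key]
      by_cases hu : u ∈ I <;> by_cases hv : v ∈ I
      · have h2 : I ∩ {u, v} = {u, v} := by
          ext x; simp only [Finset.mem_inter, Finset.mem_insert, Finset.mem_singleton]
          constructor
          · exact fun h => h.2
          · rintro (rfl | rfl) <;> simp [hu, hv, hadj]
        rw [h2]
        simp [huv, hu, hv, hadj]
      · have h2 : I ∩ {u, v} = {u} := by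
          ext x; simp only [Finset.mem_inter, Finset.mem_insert, Finset.mem_singleton]
          constructor
          · rintro ⟨hx, rfl | rfl⟩ <;> simp_all
          · rintro rfl; simp [hu]
        rw [h2]
        simp [hu, hv, hadj]
      · have h2 : I ∩ {u, v} = {v} := by
          ext x; simp only [Finset.mem_inter, Finset.mem_insert, Finset.mem_singleton]
          constructor
          · rintro ⟨hx, rfl | rfl⟩ <;> simp_all
          · rintro rfl; simp [hv]
        rw [h2]
        simp [hu, hv, hadj]
      · have h2 : I ∩ {u, v} = ∅ := by
          ext x; simp only [Finset.mem_inter, Finset.mem_insert, Finset.mem_singleton]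
          constructor
          · rintro ⟨hx, rfl | rfl⟩ <;> simp_all
          · simp
        rw [h2]
        simp [hu, hv, hadj]
    · simp [hE]

/-- If `r[E]/(N-1) ≤ (r[E(I)] + r[E(I,[N]\I)])/|I|` for every nonempty proper
`I`, then `R_i = r[E_i] - r[E]/(N-1)` are nonnegative, satisfy `Σ_{i∈I} R_i ≥ r[E(I)]` for
all nonempty proper `I`, and `r[E] - Σ_i R_i = r[E]/(N-1)`. -/
theorem stmt_12 {N : ℕ} (hN : 2 ≤ N) (G : SimpleGraph (Fin N))
    (r : Sym2 (Fin N) → ℝ) (hr : ∀ e, 0 ≤ r e)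
    (h : ∀ I : Finset (Fin N), I.Nonempty → I ≠ Finset.univ →
      wsum r G.edgeSet / (N - 1 : ℝ) ≤
        (wsum r {e | e ∈ G.edgeSet ∧ ∀ v ∈ e, v ∈ I} +
          wsum r {e | e ∈ G.edgeSet ∧ ∃ u v, e = s(u, v) ∧ u ∈ I ∧ v ∉ I}) / (I.card : ℝ))
    (R : Fin N → ℝ)
    (hR : ∀ i, R i = wsum r {e | e ∈ G.edgeSet ∧ i ∈ e} - wsum r G.edgeSet / (N - 1 : ℝ)) :
    (∀ i, 0 ≤ R i) ∧
      (∀ I : Finset (Fin N), I.Nonempty → I ≠ Finset.univ →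
        wsum r {e | e ∈ G.edgeSet ∧ ∀ v ∈ e, v ∈ I} ≤ ∑ i ∈ I, R i) ∧
      wsum r G.edgeSet - ∑ i, R i = wsum r G.edgeSet / (N - 1 : ℝ) := by
  set c : ℝ := wsum r G.edgeSet / (N - 1 : ℝ) with hc
  have key : ∀ I : Finset (Fin N), I.Nonempty → I ≠ Finset.univ →
      wsum r {e | e ∈ G.edgeSet ∧ ∀ v ∈ e, v ∈ I} ≤ ∑ i ∈ I, R i := by
    intro I hne hproper
    have hcard : (0 : ℝ) < I.card := by exact_mod_cast Finset.card_pos.mpr hne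
    have hI := h I hne hproper
    have hsum := sum_incident G r I
    have hsumR : ∑ i ∈ I, R i = ∑ i ∈ I, wsum r {e | e ∈ G.edgeSet ∧ i ∈ e} - I.card * c := by
      simp [hR, Finset.sum_sub_distrib, mul_comm]
    rw [le_div_iff₀ hcard] at hI
    have ha := wsum_nonneg hr {e | e ∈ G.edgeSet ∧ ∀ v ∈ e, v ∈ I}
    have hb := wsum_nonneg hr
      {e | e ∈ G.edgeSet ∧ ∃ u v, e = s(u, v) ∧ u ∈ I ∧ v ∉ I}
    rw [hsumR, hsum]
    nlinarith [hI]
  refine ⟨?_, key, ?_⟩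
  · intro i
    have hproper : ({i} : Finset (Fin N)) ≠ Finset.univ := by
      intro hcontra
      have := congrArg Finset.card hcontra
      simp at this
      omega
    have h1 := key {i} (Finset.singleton_nonempty i) hproper
    have hsum := sum_incident G r ({i} : Finset (Fin N))
    have ha := wsum_nonneg hr {e | e ∈ G.edgeSet ∧ ∀ v ∈ e, v ∈ ({i} : Finset (Fin N))}
    simp only [Finset.sum_singleton] at h1
    linarith
  · have hsum := sum_incident G r (Finset.univ : Finset (Fin N))
    have hA : wsum r {e | e ∈ G.edgeSet ∧ ∀ v ∈ e, v ∈ (Finset.univ : Finset (Fin N))}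
        = wsum r G.edgeSet := by
      congr 1
      ext e
      simp
    have hB : wsum r {e | e ∈ G.edgeSet ∧
        ∃ u v, e = s(u, v) ∧ u ∈ (Finset.univ : Finset (Fin N)) ∧ v ∉ (Finset.univ : Finset (Fin N))}
        = 0 := by
      rw [wsum_eq]
      simp
    rw [hA, hB] at hsum
    have hsumR : ∑ i, R i = ∑ i : Fin N, wsum r {e | e ∈ G.edgeSet ∧ i ∈ e} - N * c := by
      simp [hR, Finset.sum_sub_distrib, mul_comm]
    have hNne : (N : ℝ) - 1 ≠ 0 := by
      have : (2 : ℝ) ≤ N := by exact_mod_cast hN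
      linarith
    have hW : wsum r G.edgeSet = ((N : ℝ) - 1) * c := by
      rw [hc]; field_simp
    rw [hsumR, hsum]
    linarith [hW]
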